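/- With quadrature nodes λ₁,…,λ_K (eigenvalues of T_K) and weights s_i = ((C^T b)_i)², if the original quadrature I_w = Σ_{i=1}^N f(x_i) w_i satisfies |I − I_w| ≤ ε for the exact integral I, and f is a polynomial of degree at most 2K − 1, then the reduced quadrature I_s = Σ_{i=1}^K f(λ_i) s_i satisfies I_s = I_w, and hence |I − I_s| ≤ ε. -/

import Mathlib

open Matrix Polynomial


private lemma vecMul_pow_symm {n : Type*} [Fintype n] [DecidableEq n]
    (D : Matrix n n ℝ) (hD : Dᵀ = D) (j : ℕ) (v : n → ℝ) :
    v ᵥ* D ^ j = D ^ j *ᵥ v := by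
  rw [← Matrix.vecMul_transpose, Matrix.transpose_pow, hD]

private lemma dot_pow_split {n : Type*} [Fintype n] [DecidableEq n]
    (D : Matrix n n ℝ) (hD : Dᵀ = D) (j l : ℕ) (v : n → ℝ) :
    v ⬝ᵥ (D ^ (j + l) *ᵥ v) = (D ^ j *ᵥ v) ⬝ᵥ (D ^ l *ᵥ v) := by
  rw [pow_add, ← Matrix.mulVec_mulVec, Matrix.dotProduct_mulVec, vecMul_pow_symm D hD]

private lemma dot_pow_split' {n : Type*} [Fintype n] [DecidableEq n]
    (D : Matrix n n ℝ) (hD : Dᵀ = D) (j l : ℕ) (v : n → ℝ) :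
    v ⬝ᵥ (D ^ (j + (1 + l)) *ᵥ v) = (D ^ j *ᵥ v) ⬝ᵥ (D *ᵥ (D ^ l *ᵥ v)) := by
  rw [pow_add, pow_add, pow_one, ← Matrix.mulVec_mulVec, ← Matrix.mulVec_mulVec,
    Matrix.dotProduct_mulVec, vecMul_pow_symm D hD]

/-- Reduced quadrature from the Lanczos process: with `A = diag(x)`,
`b = (√w₁,…,√w_N)ᵀ`, nodes `λᵢ = μ i` (eigenvalues of `T_K`) and weights
`sᵢ = ((Cᵀb)ᵢ)²` where `C = QV`, if `|I - I_w| ≤ ε` with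
`I_w = Σ f(xᵢ) wᵢ`, then for polynomials `f` of degree `≤ 2K-1` the reduced
quadrature `I_s = Σ f(λᵢ) sᵢ` satisfies `I_s = I_w`, hence `|I - I_s| ≤ ε`. -/
theorem lanczos_quadrature_exactness (N K : ℕ) (hK : 1 ≤ K)
    (x w : Fin N → ℝ) (hw : ∀ i, 0 < w i)
    (b : Fin N → ℝ) (hb : ∀ i, b i = Real.sqrt (w i))
    (Q : Matrix (Fin N) (Fin K) ℝ) (hQ : Qᵀ * Q = 1)
    (hspan : Submodule.span ℝ
        {v : Fin N → ℝ | ∃ j < K, v = ((Matrix.diagonal x) ^ j) *ᵥ b}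
      = Submodule.span ℝ (Set.range Qᵀ))
    (V : Matrix (Fin K) (Fin K) ℝ) (hV : Vᵀ * V = 1) (μ : Fin K → ℝ)
    (hT : Qᵀ * Matrix.diagonal x * Q = V * Matrix.diagonal μ * Vᵀ)
    (I ε : ℝ) (f : Polynomial ℝ) (hf : f.natDegree ≤ 2 * K - 1)
    (hIw : |I - ∑ i, f.eval (x i) * w i| ≤ ε) :
    (∑ i, f.eval (μ i) * ((Q * V)ᵀ *ᵥ b) i ^ 2) = ∑ i, f.eval (x i) * w i ∧
    |I - ∑ i, f.eval (μ i) * ((Q * V)ᵀ *ᵥ b) i ^ 2| ≤ ε := by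
  have hVVt : V * Vᵀ = 1 := mul_eq_one_comm.mp hV
  obtain ⟨A, hA⟩ : ∃ A', A' = Matrix.diagonal x := ⟨_, rfl⟩
  obtain ⟨M, hMd⟩ : ∃ M', M' = Matrix.diagonal μ := ⟨_, rfl⟩
  obtain ⟨C, hCd⟩ : ∃ C', C' = Q * V := ⟨_, rfl⟩
  rw [← hA, ← hMd] at hT
  rw [← hA] at hspan
  rw [← hCd]
  have hAt : Aᵀ = A := by rw [hA, Matrix.diagonal_transpose]
  have hMt : Mᵀ = M := by rw [hMd, Matrix.diagonal_transpose]
  have hCtC : Cᵀ * C = 1 := by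
    rw [hCd, Matrix.transpose_mul, Matrix.mul_assoc, ← Matrix.mul_assoc Qᵀ Q V, hQ,
      Matrix.one_mul, hV]
  have hCCt : C * Cᵀ = Q * Qᵀ := by
    rw [hCd, Matrix.transpose_mul, Matrix.mul_assoc, ← Matrix.mul_assoc V Vᵀ Qᵀ, hVVt,
      Matrix.one_mul]
  have hM : Cᵀ * A * C = M := by
    have e1 : Cᵀ * A * C = Vᵀ * (Qᵀ * A * Q) * V := by
      rw [hCd, Matrix.transpose_mul]; simp only [Matrix.mul_assoc]
    rw [e1, hT]
    calc Vᵀ * (V * M * Vᵀ) * V = Vᵀ * V * M * (Vᵀ * V) := by simp only [Matrix.mul_assoc]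
      _ = M := by rw [hV, Matrix.one_mul, Matrix.mul_one]
  have hproj : ∀ j < K, (Q * Qᵀ) *ᵥ (A ^ j *ᵥ b) = A ^ j *ᵥ b := by
    intro j hj
    have hmem : (A ^ j *ᵥ b) ∈ LinearMap.range Q.mulVecLin := by
      rw [Matrix.range_mulVecLin, show Set.range Q.col = Set.range Qᵀ from rfl, ← hspan]
      exact Submodule.subset_span ⟨j, hj, rfl⟩
    obtain ⟨c, hc⟩ := hmem
    simp only [Matrix.mulVecLin_apply] at hc
    rw [← hc, Matrix.mulVec_mulVec, Matrix.mul_assoc, hQ, Matrix.mul_one]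
  -- key identity: C M^j Cᵀ b = A^j b for j < K
  have hkey : ∀ j < K, C *ᵥ (M ^ j *ᵥ (Cᵀ *ᵥ b)) = A ^ j *ᵥ b := by
    intro j hj
    induction j with
    | zero =>
      rw [pow_zero, pow_zero, Matrix.one_mulVec, Matrix.one_mulVec, Matrix.mulVec_mulVec, hCCt]
      have := hproj 0 (by omega)
      rwa [pow_zero, Matrix.one_mulVec] at this
    | succ j ih =>
      have hj' : j < K := by omega
      have ihj := ih hj'
      have hstep : C * M = Q * Qᵀ * A * C := by
        rw [← hM]
        calc C * (Cᵀ * A * C) = C * Cᵀ * A * C := by simp only [Matrix.mul_assoc]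
          _ = Q * Qᵀ * A * C := by rw [hCCt]
      rw [pow_succ', ← Matrix.mulVec_mulVec, Matrix.mulVec_mulVec, hstep,
        ← Matrix.mulVec_mulVec, ← Matrix.mulVec_mulVec, ihj,
        Matrix.mulVec_mulVec b A (A ^ j), ← pow_succ']
      exact hproj (j + 1) hj
  -- inner product lemmas
  have hdot1 : ∀ u v : Fin K → ℝ, (C *ᵥ u) ⬝ᵥ (C *ᵥ v) = u ⬝ᵥ v := by
    intro u v
    rw [Matrix.dotProduct_mulVec, ← Matrix.vecMul_transpose, Matrix.vecMul_vecMul, hCtC,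
      Matrix.vecMul_one]
  have hdot2 : ∀ u v : Fin K → ℝ, (C *ᵥ u) ⬝ᵥ (A *ᵥ (C *ᵥ v)) = u ⬝ᵥ (M *ᵥ v) := by
    intro u v
    rw [Matrix.mulVec_mulVec, Matrix.dotProduct_mulVec, ← Matrix.vecMul_transpose,
      Matrix.vecMul_vecMul, ← Matrix.mul_assoc, hM, ← Matrix.dotProduct_mulVec]
  -- monomial exactness
  have hmono : ∀ m ≤ 2 * K - 1,
      (Cᵀ *ᵥ b) ⬝ᵥ (M ^ m *ᵥ (Cᵀ *ᵥ b)) = b ⬝ᵥ (A ^ m *ᵥ b) := by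
    intro m hm
    obtain ⟨j, l, hj, hl, hm'⟩ : ∃ j l, j < K ∧ l < K ∧ (m = j + l ∨ m = j + (1 + l)) := by
      rcases Nat.lt_or_ge m K with h | h
      · exact ⟨m, 0, h, hK, Or.inl (by omega)⟩
      rcases Nat.lt_or_ge m (2 * K - 1) with h2 | h2
      · exact ⟨K - 1, m - (K - 1), by omega, by omega, Or.inl (by omega)⟩
      · exact ⟨K - 1, K - 1, by omega, by omega, Or.inr (by omega)⟩
    rcases hm' with rfl | rfl
    · calc (Cᵀ *ᵥ b) ⬝ᵥ (M ^ (j + l) *ᵥ (Cᵀ *ᵥ b))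
          = (M ^ j *ᵥ (Cᵀ *ᵥ b)) ⬝ᵥ (M ^ l *ᵥ (Cᵀ *ᵥ b)) := dot_pow_split M hMt j l _
        _ = (C *ᵥ (M ^ j *ᵥ (Cᵀ *ᵥ b))) ⬝ᵥ (C *ᵥ (M ^ l *ᵥ (Cᵀ *ᵥ b))) := (hdot1 _ _).symm
        _ = (A ^ j *ᵥ b) ⬝ᵥ (A ^ l *ᵥ b) := by rw [hkey j hj, hkey l hl]
        _ = b ⬝ᵥ (A ^ (j + l) *ᵥ b) := (dot_pow_split A hAt j l b).symm
    · calc (Cᵀ *ᵥ b) ⬝ᵥ (M ^ (j + (1 + l)) *ᵥ (Cᵀ *ᵥ b))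
          = (M ^ j *ᵥ (Cᵀ *ᵥ b)) ⬝ᵥ (M *ᵥ (M ^ l *ᵥ (Cᵀ *ᵥ b))) := dot_pow_split' M hMt j l _
        _ = (C *ᵥ (M ^ j *ᵥ (Cᵀ *ᵥ b))) ⬝ᵥ (A *ᵥ (C *ᵥ (M ^ l *ᵥ (Cᵀ *ᵥ b)))) :=
            (hdot2 _ _).symm
        _ = (A ^ j *ᵥ b) ⬝ᵥ (A *ᵥ (A ^ l *ᵥ b)) := by rw [hkey j hj, hkey l hl]
        _ = b ⬝ᵥ (A ^ (j + (1 + l)) *ᵥ b) := (dot_pow_split' A hAt j l b).symm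
  -- rewrite the quadrature sums as dot products
  have hw2 : ∀ i, b i ^ 2 = w i := by
    intro i; rw [hb]; exact Real.sq_sqrt (hw i).le
  have hsum1 : ∀ m : ℕ, (Cᵀ *ᵥ b) ⬝ᵥ (M ^ m *ᵥ (Cᵀ *ᵥ b))
      = ∑ i, μ i ^ m * ((Cᵀ *ᵥ b) i) ^ 2 := by
    intro m
    rw [hMd, Matrix.diagonal_pow]
    simp only [dotProduct, Matrix.mulVec_diagonal, Pi.pow_apply]
    exact Finset.sum_congr rfl fun i _ => by ring
  have hsum2 : ∀ m : ℕ, b ⬝ᵥ (A ^ m *ᵥ b) = ∑ i, x i ^ m * w i := by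
    intro m
    rw [hA, Matrix.diagonal_pow]
    simp only [dotProduct, Matrix.mulVec_diagonal, Pi.pow_apply]
    exact Finset.sum_congr rfl fun i _ => by rw [← hw2 i]; ring
  have hmono' : ∀ m ≤ 2 * K - 1,
      (∑ i, μ i ^ m * ((Cᵀ *ᵥ b) i) ^ 2) = ∑ i, x i ^ m * w i := by
    intro m hm
    rw [← hsum1, ← hsum2, hmono m hm]
  -- extend to polynomials of degree ≤ 2K-1
  have key : (∑ i, f.eval (μ i) * ((Cᵀ *ᵥ b) i) ^ 2) = ∑ i, f.eval (x i) * w i := by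
    have hev : ∀ t : ℝ, f.eval t
        = ∑ m ∈ Finset.range (f.natDegree + 1), f.coeff m * t ^ m :=
      fun t => Polynomial.eval_eq_sum_range t
    simp only [hev, Finset.sum_mul]
    rw [Finset.sum_comm, Finset.sum_comm (s := Finset.univ)]
    refine Finset.sum_congr rfl fun m hm => ?_
    have hm' : m ≤ 2 * K - 1 := by
      have := Finset.mem_range.mp hm; omega
    calc (∑ i, f.coeff m * μ i ^ m * ((Cᵀ *ᵥ b) i) ^ 2)
        = f.coeff m * ∑ i, μ i ^ m * ((Cᵀ *ᵥ b) i) ^ 2 := by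
          rw [Finset.mul_sum]; exact Finset.sum_congr rfl fun i _ => by ring
      _ = f.coeff m * ∑ i, x i ^ m * w i := by rw [hmono' m hm']
      _ = ∑ i, f.coeff m * x i ^ m * w i := by
          rw [Finset.mul_sum]; exact Finset.sum_congr rfl fun i _ => by ring
  exact ⟨key, by rwa [key]⟩
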